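/- Let n ≥ 2 and let γ₁(n) = (n − 1 + √((n−2)n + 5))/2. Then for every s ∈ [1, γ₁(n)] there exists a Minkowski centered convex body C in ℝ^n with s(C) = s such that C ∩ (−C) is optimally contained in conv(C ∪ (−C)). -/

import Mathlib

open Pointwise RealInnerProductSpace

variable {E : Type*} [NormedAddCommGroup E] [InnerProductSpace ℝ E]

/-- `K` is optimally contained in `C`: `K ⊆ C` and there is no `ρ ∈ [0,1)` and
translation `t` with `K ⊆ ρ • C + {t}`. -/
def OptCont (K C : Set E) : Prop :=
  K ⊆ C ∧ ¬∃ ρ : ℝ, 0 ≤ ρ ∧ ρ < 1 ∧ ∃ t : E, K ⊆ ρ • C + {t}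

/-- The polar set `C° = {a | ∀ x ∈ C, ⟪a,x⟫ ≤ 1}`. -/
def polarSet (C : Set E) : Set E := {a : E | ∀ x ∈ C, ⟪a, x⟫ ≤ 1}

/-- The Minkowski asymmetry of `C`. -/
noncomputable def minkAsym (C : Set E) : ℝ :=
  sInf {ρ : ℝ | 0 < ρ ∧ ∃ c : E, C - {c} ⊆ ρ • ({c} - C)}

/-- `C` is Minkowski centered if `C ⊆ s(C) • (-C)`. -/
def MinkCentered (C : Set E) : Prop := C ⊆ minkAsym C • (-C)

namespace Stmt12Aux

/-- Coordinates-to-Euclidean-vector constructor. -/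
noncomputable def vv (k : ℕ) (f : Fin (k+2) → ℝ) : EuclideanSpace ℝ (Fin (k+2)) :=
  (WithLp.equiv 2 _).symm f

lemma vv_apply (k : ℕ) (f : Fin (k+2) → ℝ) (j : Fin (k+2)) : vv k f j = f j := rfl

lemma inner_vv_left (k : ℕ) (f : Fin (k+2) → ℝ) (x : EuclideanSpace ℝ (Fin (k+2))) :
    ⟪vv k f, x⟫ = ∑ j, f j * x j := by
  simp [vv, PiLp.inner_apply, RCLike.inner_apply, WithLp.equiv_symm_apply, PiLp.toLp_apply]
  simp only [mul_comm]

/-- the ``positive part'' profile: `a` at coordinate 0, `b` elsewhere. -/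
def fP (k : ℕ) (a b : ℝ) : Fin (k+2) → ℝ := fun j => if j = 0 then a else b

/-- the deep-simplex profile: `0` at coordinate 0, `-s` at `i`, `1` elsewhere. -/
def fK (k : ℕ) (s : ℝ) (i : Fin (k+2)) : Fin (k+2) → ℝ :=
  fun j => if j = 0 then 0 else if j = i then -s else 1

/-- coordinate-`i` indicator profile. -/
def fD (k : ℕ) (i : Fin (k+2)) : Fin (k+2) → ℝ := fun j => if j = i then 1 else 0

lemma sum0 (k : ℕ) (A : ℝ) (B : Fin (k+2) → ℝ) :
    ∑ j, (if j = (0 : Fin (k+2)) then A else B j)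
      = A + ∑ j ∈ Finset.univ.erase (0 : Fin (k+2)), B j := by
  rw [← Finset.add_sum_erase _ _ (Finset.mem_univ (0 : Fin (k+2)))]
  simp only [if_pos rfl]
  congr 1
  exact Finset.sum_congr rfl fun j hj => if_neg (Finset.ne_of_mem_erase hj)

lemma eraseCard (k : ℕ) : (Finset.univ.erase (0 : Fin (k+2))).card = k + 1 := by
  rw [Finset.card_erase_of_mem (Finset.mem_univ _)]
  simp

lemma eraseSum_const (k : ℕ) (c : ℝ) :
    ∑ _j ∈ Finset.univ.erase (0 : Fin (k+2)), c = ((k : ℝ) + 1) * c := by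
  rw [Finset.sum_const, eraseCard]
  push_cast [eraseCard]
  ring

lemma eraseSum_ite (k : ℕ) (i : Fin (k+2)) (hi : i ≠ 0) (b c : ℝ) :
    ∑ j ∈ Finset.univ.erase (0 : Fin (k+2)), (if j = i then b else c)
      = b + (k : ℝ) * c := by
  have hi' : i ∈ Finset.univ.erase (0 : Fin (k+2)) :=
    Finset.mem_erase.mpr ⟨hi, Finset.mem_univ _⟩
  rw [← Finset.add_sum_erase _ _ hi', if_pos rfl]
  congr 1
  rw [Finset.sum_congr rfl fun j hj => if_neg (Finset.ne_of_mem_erase hj),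
    Finset.sum_const, Finset.card_erase_of_mem hi', eraseCard]
  simp

lemma innerP (k : ℕ) (a b : ℝ) (x : EuclideanSpace ℝ (Fin (k+2))) :
    ⟪vv k (fP k a b), x⟫ = a * x 0 + b * ∑ j ∈ Finset.univ.erase (0 : Fin (k+2)), x j := by
  rw [inner_vv_left]
  have : ∀ j : Fin (k+2), fP k a b j * x j = if j = 0 then a * x 0 else b * x j := by
    intro j
    by_cases h : j = 0
    · subst h; simp [fP]
    · simp [fP, h]
  rw [Finset.sum_congr rfl fun j _ => this j, sum0, Finset.mul_sum]

lemma innerD (k : ℕ) (i : Fin (k+2)) (x : EuclideanSpace ℝ (Fin (k+2))) :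
    ⟪vv k (fD k i), x⟫ = x i := by
  rw [inner_vv_left]
  have : ∀ j : Fin (k+2), fD k i j * x j = if j = i then x i else 0 := by
    intro j
    by_cases h : j = i
    · subst h; simp [fD]
    · simp [fD, h]
  rw [Finset.sum_congr rfl fun j _ => this j, Finset.sum_ite_eq' Finset.univ i fun _ => x i,
    if_pos (Finset.mem_univ _)]

lemma innerPP (k : ℕ) (a b a' b' : ℝ) :
    ⟪vv k (fP k a b), vv k (fP k a' b')⟫ = a * a' + b * (((k:ℝ)+1) * b') := by
  rw [innerP]
  have h0 : vv k (fP k a' b') 0 = a' := by rw [vv_apply]; simp [fP]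
  have he : ∑ j ∈ Finset.univ.erase (0 : Fin (k+2)), vv k (fP k a' b') j
      = ((k:ℝ)+1) * b' := by
    rw [Finset.sum_congr rfl fun j hj => ?_, eraseSum_const]
    rw [vv_apply]; simp [fP, Finset.ne_of_mem_erase hj]
  rw [h0, he]

lemma innerPK (k : ℕ) (s a b : ℝ) (i : Fin (k+2)) (hi : i ≠ 0) :
    ⟪vv k (fP k a b), vv k (fK k s i)⟫ = b * (-s + (k:ℝ)) := by
  rw [innerP]
  have h0 : vv k (fK k s i) 0 = 0 := by rw [vv_apply]; simp [fK]
  have he : ∑ j ∈ Finset.univ.erase (0 : Fin (k+2)), vv k (fK k s i) j = -s + (k:ℝ) := by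
    have : ∀ j ∈ Finset.univ.erase (0 : Fin (k+2)),
        vv k (fK k s i) j = if j = i then -s else 1 := by
      intro j hj
      rw [vv_apply]; simp [fK, Finset.ne_of_mem_erase hj]
    rw [Finset.sum_congr rfl this, eraseSum_ite k i hi]
    ring
  rw [h0, he]
  ring

/-- The generating points (un-reflected part). -/
def GenA (k : ℕ) (s : ℝ) : Set (EuclideanSpace ℝ (Fin (k+2))) :=
  {vv k (fP k 1 0), vv k (fP k (-1) 0), vv k (fP k 1 1), vv k (fP k (-1) 1)} ∪
    {x | ∃ i : Fin (k+2), i ≠ 0 ∧ x = vv k (fK k s i)}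

/-- All generators: `GenA` together with `(-1/s) • GenA`. -/
def Gen (k : ℕ) (s : ℝ) : Set (EuclideanSpace ℝ (Fin (k+2))) :=
  GenA k s ∪ (fun x => (-s⁻¹) • x) '' GenA k s

/-- The body. -/
def CC (k : ℕ) (s : ℝ) : Set (EuclideanSpace ℝ (Fin (k+2))) :=
  convexHull ℝ (Gen k s)

noncomputable def kap (k : ℕ) (s : ℝ) : ℝ := (s - 1) / ((k:ℝ) + 1)

lemma kap_mul (k : ℕ) (s : ℝ) : kap k s * ((k:ℝ) + 1) = s - 1 := by
  have : ((k:ℝ) + 1) ≠ 0 := by positivity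
  rw [kap, div_mul_cancel₀ _ this]

lemma kap_nonneg (k : ℕ) (s : ℝ) (hs1 : 1 ≤ s) : 0 ≤ kap k s := by
  have : (0:ℝ) < (k:ℝ) + 1 := by positivity
  exact div_nonneg (by linarith) (by linarith)

lemma genA_finite (k : ℕ) (s : ℝ) : (GenA k s).Finite := by
  apply Set.Finite.union
  · exact (Set.finite_singleton _).insert _ |>.insert _ |>.insert _
  · have : {x | ∃ i : Fin (k+2), i ≠ 0 ∧ x = vv k (fK k s i)}
        ⊆ (fun i => vv k (fK k s i)) '' Set.univ := by
      rintro x ⟨i, _, rfl⟩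
      exact ⟨i, trivial, rfl⟩
    exact Set.Finite.subset (Set.finite_univ.image _) this

lemma gen_finite (k : ℕ) (s : ℝ) : (Gen k s).Finite :=
  (genA_finite k s).union ((genA_finite k s).image _)

lemma genA_sub_CC (k : ℕ) (s : ℝ) : GenA k s ⊆ CC k s :=
  subset_trans Set.subset_union_left (subset_convexHull ℝ _)

lemma zero_mem_CC (k : ℕ) (s : ℝ) : (0 : EuclideanSpace ℝ (Fin (k+2))) ∈ CC k s := by
  have h1 : vv k (fP k 1 0) ∈ CC k s := genA_sub_CC k s (Or.inl (by simp))
  have h2 : vv k (fP k (-1) 0) ∈ CC k s := genA_sub_CC k s (Or.inl (by simp))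
  have hcomb := (convex_convexHull ℝ (Gen k s)) h1 h2
    (by norm_num : (0:ℝ) ≤ 1/2) (by norm_num : (0:ℝ) ≤ 1/2) (by norm_num)
  have : (1/2 : ℝ) • vv k (fP k 1 0) + (1/2 : ℝ) • vv k (fP k (-1) 0)
      = (0 : EuclideanSpace ℝ (Fin (k+2))) := by
    ext j
    by_cases h : j = 0 <;> simp [vv, fP, WithLp.equiv_symm_apply, PiLp.toLp_apply, h]
  rwa [this] at hcomb

/-- master bound extension lemma: a two-sided bound on `GenA` gives the upper bound on `CC`. -/
lemma bound_on_CC (k : ℕ) (s : ℝ) (hs1 : 1 ≤ s) (v : EuclideanSpace ℝ (Fin (k+2)))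
    (h : ∀ g ∈ GenA k s, -s ≤ ⟪v, g⟫ ∧ ⟪v, g⟫ ≤ 1) :
    ∀ x ∈ CC k s, ⟪v, x⟫ ≤ 1 := by
  have hs0 : (0:ℝ) < s := lt_of_lt_of_le one_pos hs1
  have hGen : ∀ g ∈ Gen k s, ⟪v, g⟫ ≤ 1 := by
    rintro g (hg | ⟨a, ha, rfl⟩)
    · exact (h g hg).2
    · rw [real_inner_smul_right]
      have h1 := (h a ha).1
      have hinv : s * s⁻¹ = 1 := mul_inv_cancel₀ (ne_of_gt hs0)
      nlinarith [h1, hinv, hs0, inv_pos.mpr hs0]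
  intro x hx
  have hconv : Convex ℝ {y : EuclideanSpace ℝ (Fin (k+2)) | ⟪v, y⟫ ≤ 1} := by
    apply convex_halfSpace_le
    exact ⟨fun a b => inner_add_right v a b, fun c a => real_inner_smul_right v a c⟩
  exact convexHull_min hGen hconv hx

lemma inner_fP_neg (k : ℕ) (a b : ℝ) (x : EuclideanSpace ℝ (Fin (k+2))) :
    ⟪vv k (fP k (-a) (-b)), x⟫ = -⟪vv k (fP k a b), x⟫ := by
  rw [innerP, innerP]; ring

/-- bounds for the tilted pair directions. -/
lemma boundsPair (k : ℕ) (s : ℝ) (hs1 : 1 ≤ s) (hkey : s*s ≤ ((k:ℝ)+1)*s + 1) (ε : ℝ)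
    (hε : ε = 1 ∨ ε = -1) :
    ∀ g ∈ GenA k s, -s ≤ ⟪vv k (fP k ε (-(kap k s))), g⟫ ∧
      ⟪vv k (fP k ε (-(kap k s))), g⟫ ≤ 1 := by
  have hk1 : (0:ℝ) < (k:ℝ) + 1 := by positivity
  have hκm := kap_mul k s
  have hκ0 := kap_nonneg k s hs1
  rintro g (hg | ⟨i, hi, rfl⟩)
  · simp only [Set.mem_insert_iff, Set.mem_singleton_iff] at hg
    rcases hg with rfl | rfl | rfl | rfl <;> rw [innerPP] <;>
      rcases hε with rfl | rfl <;> constructor <;> nlinarith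
  · rw [innerPK k s _ _ i hi]
    have hval : -(kap k s) * (-s + (k:ℝ)) * ((k:ℝ)+1) = (s-1)*(s - (k:ℝ)) := by
      have : -(kap k s) * (-s + (k:ℝ)) * ((k:ℝ)+1)
          = (kap k s * ((k:ℝ)+1)) * (s - (k:ℝ)) := by ring
      rw [this, hκm]
    constructor
    · nlinarith [hval, hk1, hs1]
    · nlinarith [hval, hk1, hkey]

/-- bounds for the coordinate directions. -/
lemma boundsD (k : ℕ) (s : ℝ) (hs1 : 1 ≤ s) (i : Fin (k+2)) (hi : i ≠ 0) :
    ∀ g ∈ GenA k s, -s ≤ ⟪vv k (fD k i), g⟫ ∧ ⟪vv k (fD k i), g⟫ ≤ 1 := by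
  rintro g (hg | ⟨i', hi', rfl⟩)
  · simp only [Set.mem_insert_iff, Set.mem_singleton_iff] at hg
    rcases hg with rfl | rfl | rfl | rfl <;> rw [innerD, vv_apply] <;>
      simp [fP, hi] <;> first
        | (constructor <;> linarith)
        | linarith
  · rw [innerD, vv_apply]
    by_cases h : i = i'
    · subst h
      simp only [fK, if_neg hi, if_pos rfl, if_true, eq_self_iff_true]
      constructor <;> linarith
    · simp only [fK, if_neg hi, if_neg h]
      constructor <;> linarith


lemma boundU (k : ℕ) (s : ℝ) (hs1 : 1 ≤ s) (hkey : s*s ≤ ((k:ℝ)+1)*s + 1) (ε : ℝ)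
    (hε : ε = 1 ∨ ε = -1) :
    ∀ y ∈ CC k s, -⟪vv k (fP k ε (kap k s)), y⟫ ≤ 1 := by
  intro y hy
  have hb := bound_on_CC k s hs1 _ (boundsPair k s hs1 hkey (-ε)
    (by rcases hε with rfl | rfl
        · exact Or.inr (by norm_num)
        · exact Or.inl (by norm_num))) y hy
  rw [innerP] at hb
  rw [innerP]
  linarith

lemma boundDcc (k : ℕ) (s : ℝ) (hs1 : 1 ≤ s) (i : Fin (k+2)) (hi : i ≠ 0) :
    ∀ y ∈ CC k s, y i ≤ 1 := by
  intro y hy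
  have hb := bound_on_CC k s hs1 _ (boundsD k s hs1 i hi) y hy
  rwa [innerD] at hb

lemma upperCC (k : ℕ) (s : ℝ) (hs1 : 1 ≤ s) : CC k s ⊆ s • (-(CC k s)) := by
  have hs0 : (0:ℝ) < s := lt_of_lt_of_le one_pos hs1
  apply convexHull_min ?_ (((convex_convexHull ℝ (Gen k s)).neg).smul s)
  rintro g (hg | ⟨a, ha, rfl⟩)
  · refine Set.mem_smul_set.mpr ⟨s⁻¹ • g, ?_, smul_inv_smul₀ (ne_of_gt hs0) g⟩
    rw [Set.mem_neg, ← neg_smul]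
    exact subset_convexHull ℝ _ (Or.inr ⟨g, hg, rfl⟩)
  · refine Set.mem_smul_set.mpr ⟨s⁻¹ • ((-s⁻¹) • a), ?_, smul_inv_smul₀ (ne_of_gt hs0) _⟩
    rw [Set.mem_neg]
    have heq : -(s⁻¹ • ((-s⁻¹) • a)) = (s⁻¹ * s⁻¹) • a + (1 - s⁻¹ * s⁻¹) • (0 : EuclideanSpace ℝ (Fin (k+2))) := by
      rw [smul_smul, smul_zero, add_zero, ← neg_smul]
      congr 1
      ring
    rw [heq]
    have hmem : a ∈ CC k s := genA_sub_CC k s ha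
    have hinv : s * s⁻¹ = 1 := mul_inv_cancel₀ (ne_of_gt hs0)
    have hpos : 0 < s⁻¹ := inv_pos.mpr hs0
    have hle : s⁻¹ * s⁻¹ ≤ 1 := by nlinarith
    exact (convex_convexHull ℝ (Gen k s)) hmem (zero_mem_CC k s)
      (by positivity) (by linarith) (by ring)

lemma lowerCC (k : ℕ) (s : ℝ) (hs1 : 1 ≤ s) (hkey : s*s ≤ ((k:ℝ)+1)*s + 1)
    (ρ : ℝ) (hρ : 0 < ρ) (c : EuclideanSpace ℝ (Fin (k+2)))
    (hsub : CC k s - {c} ⊆ ρ • ({c} - CC k s)) : s ≤ ρ := by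
  have hk1 : (0:ℝ) < (k:ℝ) + 1 := by positivity
  set κ := kap k s with hκdef
  have hκm : κ * ((k:ℝ) + 1) = s - 1 := kap_mul k s
  have hκ0 : 0 ≤ κ := kap_nonneg k s hs1
  set T : ℝ := ∑ j ∈ Finset.univ.erase (0 : Fin (k+2)), c j with hT
  have key : ∀ x ∈ CC k s, ∃ y ∈ CC k s, x - c = ρ • (c - y) := by
    intro x hx
    have hx' : x - c ∈ CC k s - {c} := Set.sub_mem_sub hx rfl
    obtain ⟨w, hw, hxw⟩ := Set.mem_smul_set.mp (hsub hx')
    obtain ⟨c', hc', y, hy, hw'⟩ := Set.mem_sub.mp hw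
    rw [Set.mem_singleton_iff] at hc'
    subst hc'
    exact ⟨y, hy, by rw [← hxw, ← hw']⟩
  -- pair inequality, sign ε
  have pair : ∀ ε : ℝ, ε = 1 ∨ ε = -1 →
      s - (ε * c 0 + κ * T) ≤ ρ * (ε * c 0 + κ * T) + ρ := by
    intro ε hε
    have hxmem : vv k (fP k ε 1) ∈ CC k s := by
      apply genA_sub_CC
      rcases hε with rfl | rfl
      · exact Or.inl (by simp)
      · exact Or.inl (by simp)
    obtain ⟨y, hy, he⟩ := key _ hxmem
    have E : ⟪vv k (fP k ε κ), vv k (fP k ε 1)⟫ - ⟪vv k (fP k ε κ), c⟫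
        = ρ * (⟪vv k (fP k ε κ), c⟫ - ⟪vv k (fP k ε κ), y⟫) := by
      rw [← inner_sub_right, ← inner_sub_right, he, real_inner_smul_right]
    have v1 : ⟪vv k (fP k ε κ), vv k (fP k ε 1)⟫ = ε * ε + (s - 1) := by
      rw [innerPP]
      nlinarith [hκm]
    have hb : -⟪vv k (fP k ε κ), y⟫ ≤ 1 := boundU k s hs1 hkey ε hε y hy
    have hc' : ⟪vv k (fP k ε κ), c⟫ = ε * c 0 + κ * T := by rw [innerP, hT]
    have hee : ε * ε = 1 := by rcases hε with rfl | rfl <;> norm_num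
    rw [v1, hc', hee] at E
    nlinarith [E, hb, hρ]
  have I1 := pair 1 (Or.inl rfl)
  have I2 := pair (-1) (Or.inr rfl)
  -- coordinate inequalities
  have coord : ∀ i ∈ Finset.univ.erase (0 : Fin (k+2)), s + c i ≤ ρ - ρ * c i := by
    intro i hi'
    have hi : i ≠ 0 := Finset.ne_of_mem_erase hi'
    have hxmem : vv k (fK k s i) ∈ CC k s :=
      genA_sub_CC k s (Or.inr ⟨i, hi, rfl⟩)
    obtain ⟨y, hy, he⟩ := key _ hxmem
    have E : ⟪vv k (fD k i), vv k (fK k s i)⟫ - ⟪vv k (fD k i), c⟫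
        = ρ * (⟪vv k (fD k i), c⟫ - ⟪vv k (fD k i), y⟫) := by
      rw [← inner_sub_right, ← inner_sub_right, he, real_inner_smul_right]
    rw [innerD, innerD, innerD] at E
    have hval : vv k (fK k s i) i = -s := by
      rw [vv_apply]
      simp [fK, hi]
    rw [hval] at E
    have hyb : y i ≤ 1 := boundDcc k s hs1 i hi y hy
    nlinarith [E, hyb, hρ]
  have S : ((k:ℝ)+1)*s + T ≤ ((k:ℝ)+1)*ρ - ρ*T := by
    have hsum := Finset.sum_le_sum coord
    rw [Finset.sum_add_distrib, Finset.sum_sub_distrib, eraseSum_const, eraseSum_const,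
      ← Finset.mul_sum, ← hT] at hsum
    linarith [hsum]
  have hS2 : 2*κ*(((k:ℝ)+1)*s + T) ≤ 2*κ*(((k:ℝ)+1)*ρ - ρ*T) :=
    mul_le_mul_of_nonneg_left S (by linarith)
  have e1 : 2*κ*(((k:ℝ)+1)*s) = 2*(s-1)*s := by
    rw [show 2*κ*(((k:ℝ)+1)*s) = 2*(κ*((k:ℝ)+1))*s by ring, hκm]
  have e2 : 2*κ*(((k:ℝ)+1)*ρ) = 2*(s-1)*ρ := by
    rw [show 2*κ*(((k:ℝ)+1)*ρ) = 2*(κ*((k:ℝ)+1))*ρ by ring, hκm]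
  have h2ss : 2*s*s ≤ 2*s*ρ := by nlinarith [I1, I2, hS2, e1, e2]
  have h2s : (0:ℝ) < 2*s := by linarith
  exact le_of_mul_le_mul_left (by linarith [h2ss] : (2*s)*s ≤ (2*s)*ρ) h2s


lemma single_eq_vvD (k : ℕ) (j : Fin (k+2)) :
    EuclideanSpace.single j (1:ℝ) = vv k (fD k j) := by
  ext l
  rw [EuclideanSpace.single_apply, vv_apply]
  simp [fD]

lemma interiorCC (k : ℕ) (s : ℝ) (hs1 : 1 ≤ s) : (interior (CC k s)).Nonempty := by
  rw [CC, (convex_convexHull ℝ (Gen k s)).interior_nonempty_iff_affineSpan_eq_top,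
    affineSpan_convexHull]
  have hne : (Gen k s).Nonempty := ⟨vv k (fP k 1 0), Or.inl (Or.inl (by simp))⟩
  rw [AffineSubspace.affineSpan_eq_top_iff_vectorSpan_eq_top_of_nonempty ℝ
    (EuclideanSpace ℝ (Fin (k+2))) (EuclideanSpace ℝ (Fin (k+2))) hne]
  set V := vectorSpan ℝ (Gen k s) with hV
  have hdiff : ∀ x ∈ Gen k s, ∀ y ∈ Gen k s, x - y ∈ V := by
    intro x hx y hy
    rw [← vsub_eq_sub]
    exact vsub_mem_vectorSpan ℝ hx hy
  have hmemA : ∀ x ∈ GenA k s, x ∈ Gen k s := fun x hx => Or.inl hx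
  have h1 : vv k (fP k 1 0) ∈ Gen k s := hmemA _ (Or.inl (by simp))
  have h2 : vv k (fP k (-1) 0) ∈ Gen k s := hmemA _ (Or.inl (by simp))
  have h3 : vv k (fP k 1 1) ∈ Gen k s := hmemA _ (Or.inl (by simp))
  have hd0 : vv k (fD k 0) ∈ V := by
    have hmem := hdiff _ h1 _ h2
    have heq : vv k (fP k 1 0) - vv k (fP k (-1) 0) = (2:ℝ) • vv k (fD k 0) := by
      ext l
      by_cases h : l = 0 <;>
        simp [vv, fP, fD, WithLp.equiv_symm_apply, PiLp.toLp_apply, h, PiLp.sub_apply, PiLp.smul_apply] <;>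
        norm_num
    have := V.smul_mem (2⁻¹ : ℝ) hmem
    rwa [heq, smul_smul, inv_mul_cancel₀ (by norm_num : (2:ℝ) ≠ 0), one_smul] at this
  have hdj : ∀ j : Fin (k+2), j ≠ 0 → vv k (fD k j) ∈ V := by
    intro j hj
    have hK : vv k (fK k s j) ∈ Gen k s := hmemA _ (Or.inr ⟨j, hj, rfl⟩)
    have hmem := hdiff _ h3 _ hK
    have hmem2 : vv k (fP k 1 1) - vv k (fK k s j) - vv k (fD k 0) ∈ V :=
      V.sub_mem hmem hd0
    have heq : vv k (fP k 1 1) - vv k (fK k s j) - vv k (fD k 0)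
        = (1 + s) • vv k (fD k j) := by
      ext l
      by_cases h0 : l = 0
      · simp [vv, fP, fK, fD, WithLp.equiv_symm_apply, PiLp.toLp_apply, h0, hj.symm,
          PiLp.sub_apply, PiLp.smul_apply, (show l ≠ j by rw [h0]; exact fun h => hj h.symm)]
      · by_cases h : l = j <;>
          simp [vv, fP, fK, fD, WithLp.equiv_symm_apply, PiLp.toLp_apply, h0, h, hj, PiLp.sub_apply,
            PiLp.smul_apply] <;>
          ring
    have hs0 : (1 + s) ≠ 0 := by linarith
    have := V.smul_mem ((1+s)⁻¹ : ℝ) hmem2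
    rwa [heq, smul_smul, inv_mul_cancel₀ hs0, one_smul] at this
  have hsingle : ∀ j : Fin (k+2), EuclideanSpace.single j (1:ℝ) ∈ V := by
    intro j
    rw [single_eq_vvD]
    by_cases h : j = 0
    · rw [h]; exact hd0
    · exact hdj j h
  have hbasis := (EuclideanSpace.basisFun (Fin (k+2)) ℝ).toBasis.span_eq
  have hrange : Set.range ((EuclideanSpace.basisFun (Fin (k+2)) ℝ).toBasis) ⊆ (V : Set _) := by
    rintro x ⟨j, rfl⟩
    rw [OrthonormalBasis.coe_toBasis, EuclideanSpace.basisFun_apply]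
    exact hsingle j
  have hle : Submodule.span ℝ (Set.range ((EuclideanSpace.basisFun (Fin (k+2)) ℝ).toBasis)) ≤ V :=
    Submodule.span_le.mpr hrange
  rw [hbasis] at hle
  exact top_unique hle

lemma asymCC (k : ℕ) (s : ℝ) (hs1 : 1 ≤ s) (hkey : s*s ≤ ((k:ℝ)+1)*s + 1) :
    minkAsym (CC k s) = s := by
  have hs0 : (0:ℝ) < s := lt_of_lt_of_le one_pos hs1
  have hmem : s ∈ {ρ : ℝ | 0 < ρ ∧ ∃ c : EuclideanSpace ℝ (Fin (k+2)),
      CC k s - {c} ⊆ ρ • ({c} - CC k s)} := by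
    refine ⟨hs0, 0, ?_⟩
    intro x hx
    obtain ⟨a, ha, b, hb, hab⟩ := Set.mem_sub.mp hx
    rw [Set.mem_singleton_iff] at hb
    subst hb
    obtain ⟨y, hy, hay⟩ := Set.mem_smul_set.mp (upperCC k s hs1 ha)
    refine Set.mem_smul_set.mpr ⟨y, ?_, by rw [← hab, ← hay]; abel⟩
    exact Set.mem_sub.mpr ⟨0, rfl, -y, Set.mem_neg.mp hy, by abel⟩
  have hlb : ∀ ρ ∈ {ρ : ℝ | 0 < ρ ∧ ∃ c : EuclideanSpace ℝ (Fin (k+2)),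
      CC k s - {c} ⊆ ρ • ({c} - CC k s)}, s ≤ ρ := by
    rintro ρ ⟨hρ0, c, hc⟩
    exact lowerCC k s hs1 hkey ρ hρ0 c hc
  unfold minkAsym
  exact le_antisymm (csInf_le ⟨s, hlb⟩ hmem) (le_csInf ⟨s, hmem⟩ hlb)

lemma neg_vvP (k : ℕ) (a b : ℝ) : -vv k (fP k a b) = vv k (fP k (-a) (-b)) := by
  ext l
  by_cases h : l = 0 <;>
    simp [vv, fP, WithLp.equiv_symm_apply, PiLp.toLp_apply, h, PiLp.neg_apply]

lemma slabQ (k : ℕ) (s : ℝ) (hs1 : 1 ≤ s) :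
    ∀ q ∈ convexHull ℝ (CC k s ∪ -(CC k s)), q 0 ≤ 1 ∧ -1 ≤ q 0 := by
  have hs0 : (0:ℝ) < s := lt_of_lt_of_le one_pos hs1
  have hboundsP : ∀ ε : ℝ, ε = 1 ∨ ε = -1 →
      ∀ g ∈ GenA k s, -s ≤ ⟪vv k (fP k ε 0), g⟫ ∧ ⟪vv k (fP k ε 0), g⟫ ≤ 1 := by
    intro ε hε
    rintro g (hg | ⟨i, hi, rfl⟩)
    · simp only [Set.mem_insert_iff, Set.mem_singleton_iff] at hg
      rcases hg with rfl | rfl | rfl | rfl <;> rw [innerPP] <;>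
        rcases hε with rfl | rfl <;> constructor <;> nlinarith
    · rw [innerPK k s _ _ i hi]
      constructor <;> nlinarith
  have hCb : ∀ y ∈ CC k s, y 0 ≤ 1 ∧ -1 ≤ y 0 := by
    intro y hy
    have h1 := bound_on_CC k s hs1 _ (hboundsP 1 (Or.inl rfl)) y hy
    have h2 := bound_on_CC k s hs1 _ (hboundsP (-1) (Or.inr rfl)) y hy
    rw [innerP] at h1 h2
    constructor <;> linarith
  have lin : IsLinearMap ℝ (fun q : EuclideanSpace ℝ (Fin (k+2)) => q 0) :=
    ⟨fun a b => rfl, fun r a => rfl⟩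
  suffices h : convexHull ℝ (CC k s ∪ -(CC k s))
      ⊆ {q : EuclideanSpace ℝ (Fin (k+2)) | q 0 ≤ 1} ∩ {q | -1 ≤ q 0} by
    intro q hq
    exact ⟨(h hq).1, (h hq).2⟩
  apply convexHull_min ?_ ((convex_halfSpace_le lin 1).inter (convex_halfSpace_ge lin (-1)))
  rintro q (hq | hq)
  · exact ⟨(hCb q hq).1, (hCb q hq).2⟩
  · have hnq := hCb (-q) (Set.mem_neg.mp hq)
    have hq0 : (-q) 0 = -(q 0) := rfl
    rw [hq0] at hnq
    exact ⟨show q 0 ≤ 1 by linarith [hnq.2], show (-1:ℝ) ≤ q 0 by linarith [hnq.1]⟩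

lemma optCC (k : ℕ) (s : ℝ) (hs1 : 1 ≤ s) :
    OptCont (CC k s ∩ -(CC k s)) (convexHull ℝ (CC k s ∪ -(CC k s))) := by
  constructor
  · exact fun x hx => subset_convexHull ℝ _ (Or.inl hx.1)
  · rintro ⟨ρ, hρ0, hρ1, t, hsub⟩
    have hx1 : vv k (fP k 1 0) ∈ CC k s ∩ -(CC k s) := by
      refine ⟨genA_sub_CC _ _ (Or.inl (by simp)), Set.mem_neg.mpr ?_⟩
      rw [neg_vvP]
      norm_num
      exact genA_sub_CC _ _ (Or.inl (by simp))
    have hx2 : vv k (fP k (-1) 0) ∈ CC k s ∩ -(CC k s) := by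
      refine ⟨genA_sub_CC _ _ (Or.inl (by simp)), Set.mem_neg.mpr ?_⟩
      rw [neg_vvP]
      norm_num
      exact genA_sub_CC _ _ (Or.inl (by simp))
    obtain ⟨u1, hu1, w1, hw1, he1⟩ := Set.mem_add.mp (hsub hx1)
    obtain ⟨u2, hu2, w2, hw2, he2⟩ := Set.mem_add.mp (hsub hx2)
    obtain ⟨q1, hq1, rfl⟩ := Set.mem_smul_set.mp hu1
    obtain ⟨q2, hq2, rfl⟩ := Set.mem_smul_set.mp hu2
    rw [Set.mem_singleton_iff] at hw1 hw2
    rw [hw1] at he1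
    rw [hw2] at he2
    have c1 : (1:ℝ) = ρ * q1 0 + t 0 := by
      have := congrArg (fun z : EuclideanSpace ℝ (Fin (k+2)) => z 0) he1
      simpa [vv, fP, WithLp.equiv_symm_apply, PiLp.toLp_apply, PiLp.add_apply, PiLp.smul_apply,
        smul_eq_mul] using this.symm
    have c2 : (-1:ℝ) = ρ * q2 0 + t 0 := by
      have := congrArg (fun z : EuclideanSpace ℝ (Fin (k+2)) => z 0) he2
      simpa [vv, fP, WithLp.equiv_symm_apply, PiLp.toLp_apply, PiLp.add_apply, PiLp.smul_apply,
        smul_eq_mul] using this.symm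
    have hb1 := (slabQ k s hs1 q1 hq1).1
    have hb2 := (slabQ k s hs1 q2 hq2).2
    have m1 : ρ * q1 0 ≤ ρ * 1 := mul_le_mul_of_nonneg_left hb1 hρ0
    have m2 : ρ * (-1) ≤ ρ * q2 0 := mul_le_mul_of_nonneg_left hb2 hρ0
    nlinarith [c1, c2, m1, m2, hρ1]

end Stmt12Aux

theorem stmt_12 {n : ℕ} (hn : 2 ≤ n) (s : ℝ) (hs1 : 1 ≤ s)
    (hs2 : s ≤ ((n:ℝ) - 1 + Real.sqrt (((n:ℝ) - 2) * n + 5)) / 2) :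
    ∃ C : Set (EuclideanSpace ℝ (Fin n)), IsCompact C ∧ Convex ℝ C ∧
      (interior C).Nonempty ∧ MinkCentered C ∧ minkAsym C = s ∧
      OptCont (C ∩ -C) (convexHull ℝ (C ∪ -C)) := by
  obtain ⟨k, rfl⟩ : ∃ k, n = k + 2 := ⟨n - 2, by omega⟩
  open Stmt12Aux in
  clear hn
  push_cast at hs2
  have hgeom : ((k:ℝ) + 2 - 2) * ((k:ℝ) + 2) + 5 = (((k:ℝ)+1)^2 + 4) := by ring
  rw [hgeom] at hs2
  set r := Real.sqrt (((k:ℝ)+1)^2 + 4) with hrdef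
  have hr0 : 0 ≤ r := Real.sqrt_nonneg _
  have hr2 : r^2 = ((k:ℝ)+1)^2 + 4 := Real.sq_sqrt (by positivity)
  have hk0 : (0:ℝ) ≤ (k:ℝ)+1 := by positivity
  have hrm : ((k:ℝ)+1) ≤ r := by nlinarith [hr2, hr0, hk0]
  have hs2' : 2*s ≤ ((k:ℝ)+1) + r := by linarith
  have hkey : s*s ≤ ((k:ℝ)+1)*s + 1 := by
    nlinarith [mul_nonneg (by linarith : (0:ℝ) ≤ ((k:ℝ)+1) + r - 2*s)
      (by linarith : (0:ℝ) ≤ 2*s - ((k:ℝ)+1) + r), hr2]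
  refine ⟨Stmt12Aux.CC k s, ?_, ?_, ?_, ?_, ?_, ?_⟩
  · exact (Stmt12Aux.gen_finite k s).isCompact_convexHull ℝ
  · exact convex_convexHull ℝ _
  · exact Stmt12Aux.interiorCC k s hs1
  · rw [MinkCentered, Stmt12Aux.asymCC k s hs1 hkey]
    exact Stmt12Aux.upperCC k s hs1
  · exact Stmt12Aux.asymCC k s hs1 hkey
  · exact Stmt12Aux.optCC k s hs1
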